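/- Let R = ℂ[x,y]/(xy) and let L be the R-module with generators ξ, η and the single relation ξ + η = 0 (modeling Ω¹ with log poles relative to the base, generated by dx/x, dy/y with dx/x + dy/y = 0). Then L is free of rank 1 over R, and the R-linear map Ω¹_{R/ℂ} → L sending dx ↦ x·ξ and dy ↦ y·η is well-defined with kernel equal to the torsion submodule of Ω¹_{R/ℂ}. -/

import Mathlib

open MvPolynomial

/-- `R = ℂ[x,y]/(xy)`. -/
abbrev Rxy : Type := MvPolynomial (Fin 2) ℂ ⧸
  Ideal.span {(X 0 * X 1 : MvPolynomial (Fin 2) ℂ)}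

/-- The class of `x` in `R`. -/
noncomputable def xR : Rxy := Ideal.Quotient.mk _ (X 0)

/-- The class of `y` in `R`. -/
noncomputable def yR : Rxy := Ideal.Quotient.mk _ (X 1)

/-- `L = R·ξ ⊕ R·η` modulo the single relation `ξ + η = 0` (modeling the relative
log differentials generated by `dx/x`, `dy/y` with `dx/x + dy/y = 0`). -/
abbrev Lmod : Type := (Fin 2 → Rxy) ⧸
  (Submodule.span Rxy {(![1, 1] : Fin 2 → Rxy)})

/-- The generator `ξ` of `L` (image of `dx/x`). -/
noncomputable def ξL : Lmod := Submodule.Quotient.mk ![1, 0]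

/-- The generator `η` of `L` (image of `dy/y`). -/
noncomputable def ηL : Lmod := Submodule.Quotient.mk ![0, 1]

/-! ### Auxiliary: polynomial ring facts -/

noncomputable abbrev Ixy : Ideal (MvPolynomial (Fin 2) ℂ) :=
  Ideal.span {(X 0 * X 1 : MvPolynomial (Fin 2) ℂ)}

noncomputable abbrev mkI : MvPolynomial (Fin 2) ℂ →+* Rxy := Ideal.Quotient.mk Ixy

noncomputable def σ0 : MvPolynomial (Fin 2) ℂ →ₐ[ℂ] MvPolynomial (Fin 2) ℂ :=
  aeval ![0, X 1]
noncomputable def σ1 : MvPolynomial (Fin 2) ℂ →ₐ[ℂ] MvPolynomial (Fin 2) ℂ :=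
  aeval ![X 0, 0]

lemma X0_dvd_sub (P : MvPolynomial (Fin 2) ℂ) : X 0 ∣ P - σ0 P := by
  induction P using MvPolynomial.induction_on with
  | C c => simp [σ0]
  | add p q hp hq =>
    rw [map_add, show p + q - (σ0 p + σ0 q) = (p - σ0 p) + (q - σ0 q) by ring]
    exact dvd_add hp hq
  | mul_X p i hp =>
    rw [map_mul]
    fin_cases i <;> simp only [σ0, aeval_X, Fin.isValue, Fin.zero_eta, Fin.mk_one,
      Matrix.cons_val_zero, Matrix.cons_val_one, Matrix.head_cons, mul_zero, sub_zero]
    · exact Dvd.dvd.mul_left (dvd_refl _) p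
    · rw [show p * X 1 - (aeval ![0, X 1]) p * X 1 = (p - σ0 p) * X 1 by rw [σ0]; ring]
      exact hp.mul_right _

lemma X1_dvd_sub (P : MvPolynomial (Fin 2) ℂ) : X 1 ∣ P - σ1 P := by
  induction P using MvPolynomial.induction_on with
  | C c => simp [σ1]
  | add p q hp hq =>
    rw [map_add, show p + q - (σ1 p + σ1 q) = (p - σ1 p) + (q - σ1 q) by ring]
    exact dvd_add hp hq
  | mul_X p i hp =>
    rw [map_mul]
    fin_cases i <;> simp only [σ1, aeval_X, Fin.isValue, Fin.zero_eta, Fin.mk_one,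
      Matrix.cons_val_zero, Matrix.cons_val_one, Matrix.head_cons, mul_zero, sub_zero]
    · rw [show p * X 0 - (aeval ![X 0, 0]) p * X 0 = (p - σ1 p) * X 0 by rw [σ1]; ring]
      exact hp.mul_right _
    · exact Dvd.dvd.mul_left (dvd_refl _) p

lemma X0_dvd_of {P : MvPolynomial (Fin 2) ℂ} (h : σ0 P = 0) : X 0 ∣ P := by
  have := X0_dvd_sub P; rwa [h, sub_zero] at this

lemma X1_dvd_of {P : MvPolynomial (Fin 2) ℂ} (h : σ1 P = 0) : X 1 ∣ P := by
  have := X1_dvd_sub P; rwa [h, sub_zero] at this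

lemma sigma0_X0 : σ0 (X 0) = 0 := by simp [σ0]
lemma sigma0_X1 : σ0 (X 1) = X 1 := by simp [σ0]
lemma sigma1_X0 : σ1 (X 0) = X 0 := by simp [σ1]
lemma sigma1_X1 : σ1 (X 1) = 0 := by simp [σ1]

/-- `x + y` is a non-zero-divisor in `R`. -/
lemma xR_add_yR_nzd : xR + yR ∈ nonZeroDivisors Rxy := by
  rw [mem_nonZeroDivisors_iff_right]
  intro f hf
  obtain ⟨p, rfl⟩ := Ideal.Quotient.mk_surjective f
  have hxy : xR + yR = mkI (X 0 + X 1) := by rw [map_add]; rfl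
  rw [hxy, ← map_mul, Ideal.Quotient.eq_zero_iff_mem, Ideal.mem_span_singleton] at hf
  obtain ⟨t, ht⟩ := hf
  -- first : X 0 ∣ p
  have h0 : σ0 p * X 1 = 0 := by
    have := congrArg σ0 ht
    simpa [map_mul, map_add, sigma0_X0, sigma0_X1] using this
  have hX0p : X 0 ∣ p := X0_dvd_of (by
    rcases mul_eq_zero.mp h0 with h | h
    · exact h
    · exact absurd h (X_ne_zero 1))
  obtain ⟨q, rfl⟩ := hX0p
  -- cancel X 0
  have ht' : q * (X 0 + X 1) = X 1 * t := by
    apply mul_left_cancel₀ (X_ne_zero (0 : Fin 2))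
    linear_combination ht
  have h1 : σ1 q * X 0 = 0 := by
    have := congrArg σ1 ht'
    simpa [map_mul, map_add, sigma1_X0, sigma1_X1] using this
  have hX1q : X 1 ∣ q := X1_dvd_of (by
    rcases mul_eq_zero.mp h1 with h | h
    · exact h
    · exact absurd h (X_ne_zero 0))
  obtain ⟨r, rfl⟩ := hX1q
  rw [Ideal.Quotient.eq_zero_iff_mem, Ideal.mem_span_singleton]
  exact ⟨r, by ring⟩

lemma hxyzero : xR * yR = 0 := by
  rw [xR, yR, ← map_mul, Ideal.Quotient.eq_zero_iff_mem]
  exact Ideal.subset_span rfl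

/-! ### The equivalence `Lmod ≃ₗ[Rxy] Rxy` -/

noncomputable def gL : (Fin 2 → Rxy) →ₗ[Rxy] Rxy :=
  (LinearMap.proj (R := Rxy) (φ := fun _ : Fin 2 => Rxy) 0) -
    (LinearMap.proj (R := Rxy) (φ := fun _ : Fin 2 => Rxy) 1)

@[simp] lemma gL_apply (v : Fin 2 → Rxy) : gL v = v 0 - v 1 := rfl

noncomputable def eL : Lmod →ₗ[Rxy] Rxy :=
  Submodule.liftQ _ gL (by
    rw [Submodule.span_le]
    rintro _ rfl
    simp [LinearMap.mem_ker])

@[simp] lemma eL_mk (v : Fin 2 → Rxy) : eL (Submodule.Quotient.mk v) = v 0 - v 1 :=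
  rfl

noncomputable def ιL : Rxy →ₗ[Rxy] Lmod := LinearMap.toSpanSingleton Rxy Lmod ξL

noncomputable def eLequiv : Lmod ≃ₗ[Rxy] Rxy :=
  LinearEquiv.ofLinear eL ιL
    (by
      apply LinearMap.ext_ring
      simp [ιL, LinearMap.toSpanSingleton_apply, ξL])
    (by
      apply Submodule.linearMap_qext
      apply LinearMap.ext
      intro v
      simp only [LinearMap.comp_apply, Submodule.mkQ_apply, LinearMap.id_apply, eL_mk,
        ιL, LinearMap.toSpanSingleton_apply, ξL]
      rw [← Submodule.Quotient.mk_smul, Submodule.Quotient.eq]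
      refine Submodule.mem_span_singleton.mpr ⟨-(v 1), ?_⟩
      funext i
      fin_cases i <;>
        simp only [Matrix.smul_cons, Matrix.smul_empty, smul_eq_mul, Pi.sub_apply,
          Fin.isValue, Fin.zero_eta, Fin.mk_one, Matrix.cons_val_zero,
          Matrix.cons_val_one, Matrix.head_cons, mul_one, mul_zero] <;> ring)

@[simp] lemma eLequiv_xiL : eLequiv ξL = 1 := by
  rw [eLequiv, LinearEquiv.ofLinear_apply, ξL, eL_mk]; simp

/-! ### The log derivation `R → R`, `x ↦ x`, `y ↦ -y` -/

noncomputable def dRaw : MvPolynomial (Fin 2) ℂ →ₗ[ℂ] Rxy :=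
  (Ideal.Quotient.mkₐ ℂ Ixy).toLinearMap.comp
    ((LinearMap.mulRight ℂ (X (0 : Fin 2))).comp (pderiv (0 : Fin 2)).toLinearMap
      - (LinearMap.mulRight ℂ (X (1 : Fin 2))).comp (pderiv (1 : Fin 2)).toLinearMap)

lemma dRaw_apply (p : MvPolynomial (Fin 2) ℂ) :
    dRaw p = mkI (pderiv 0 p * X 0 - pderiv 1 p * X 1) := rfl

lemma dRaw_ideal {m : MvPolynomial (Fin 2) ℂ} (hm : m ∈ Ixy) : dRaw m = 0 := by
  rw [Ideal.mem_span_singleton] at hm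
  obtain ⟨t, rfl⟩ := hm
  rw [dRaw_apply, Ideal.Quotient.eq_zero_iff_mem, Ideal.mem_span_singleton]
  refine ⟨X 0 * pderiv 0 t - X 1 * pderiv 1 t, ?_⟩
  simp only [pderiv_mul, pderiv_X_self, pderiv_X_of_ne (by decide : (1 : Fin 2) ≠ 0),
    pderiv_X_of_ne (by decide : (0 : Fin 2) ≠ 1)]
  ring

lemma dRaw_congr {a b : MvPolynomial (Fin 2) ℂ} (h : a - b ∈ Ixy) : dRaw a = dRaw b := by
  have := dRaw_ideal h
  rw [map_sub, sub_eq_zero] at this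
  exact this

noncomputable def fD : Rxy → Rxy := fun r =>
  Quotient.liftOn' r dRaw fun a b h =>
    dRaw_congr (by rwa [Submodule.quotientRel_def] at h)

lemma fD_mk (p : MvPolynomial (Fin 2) ℂ) : fD (mkI p) = dRaw p := rfl

set_option maxHeartbeats 1000000 in
noncomputable def Dlog : Derivation ℂ Rxy Rxy where
  toFun := fD
  map_add' a b := by
    obtain ⟨p, rfl⟩ := Ideal.Quotient.mk_surjective a
    obtain ⟨q, rfl⟩ := Ideal.Quotient.mk_surjective b
    rw [← map_add, fD_mk, fD_mk, fD_mk]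
    exact dRaw.map_add p q
  map_smul' c a := by
    obtain ⟨p, rfl⟩ := Ideal.Quotient.mk_surjective a
    have h1 : (c • (mkI p) : Rxy) = mkI (c • p) :=
      ((Ideal.Quotient.mkₐ ℂ Ixy).toLinearMap.map_smul c p).symm
    rw [RingHom.id_apply, h1]
    show fD (mkI (c • p)) = c • fD (mkI p)
    rw [fD_mk, fD_mk]
    exact dRaw.map_smul c p
  map_one_eq_zero' := by
    show fD (mkI 1) = 0
    rw [fD_mk, dRaw_apply]
    simp
  leibniz' a b := by
    obtain ⟨p, rfl⟩ := Ideal.Quotient.mk_surjective a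
    obtain ⟨q, rfl⟩ := Ideal.Quotient.mk_surjective b
    show fD (mkI p * mkI q) = mkI p • fD (mkI q) + mkI q • fD (mkI p)
    rw [← map_mul, fD_mk, fD_mk, fD_mk, dRaw_apply, dRaw_apply, dRaw_apply,
      smul_eq_mul, smul_eq_mul, ← map_mul, ← map_mul, ← map_add]
    refine congrArg mkI ?_
    simp only [pderiv_mul]
    ring

lemma Dlog_x : Dlog xR = xR := by
  show fD (mkI (X 0)) = mkI (X 0)
  rw [fD_mk, dRaw_apply]
  refine congrArg mkI ?_
  simp [pderiv_X_self, pderiv_X_of_ne (by decide : (0 : Fin 2) ≠ 1)]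

lemma Dlog_y : Dlog yR = -yR := by
  show fD (mkI (X 1)) = -(mkI (X 1))
  rw [fD_mk, dRaw_apply, ← map_neg]
  refine congrArg mkI ?_
  simp [pderiv_X_self, pderiv_X_of_ne (by decide : (1 : Fin 2) ≠ 0)]

noncomputable def ψK : KaehlerDifferential ℂ Rxy →ₗ[Rxy] Rxy :=
  Dlog.liftKaehlerDifferential

lemma ψK_Dx : ψK (KaehlerDifferential.D ℂ Rxy xR) = xR := by
  rw [ψK, Derivation.liftKaehlerDifferential_comp_D, Dlog_x]

lemma ψK_Dy : ψK (KaehlerDifferential.D ℂ Rxy yR) = -yR := by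
  rw [ψK, Derivation.liftKaehlerDifferential_comp_D, Dlog_y]

/-! ### Span of `D x`, `D y` -/

lemma mem_span_Dxy (ω : KaehlerDifferential ℂ Rxy) :
    ω ∈ Submodule.span Rxy
      {KaehlerDifferential.D ℂ Rxy xR, KaehlerDifferential.D ℂ Rxy yR} := by
  have hle : Submodule.span Rxy (Set.range (KaehlerDifferential.D ℂ Rxy)) ≤
      Submodule.span Rxy
        {KaehlerDifferential.D ℂ Rxy xR, KaehlerDifferential.D ℂ Rxy yR} := by
    rw [Submodule.span_le]
    rintro _ ⟨r, rfl⟩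
    obtain ⟨p, rfl⟩ := Ideal.Quotient.mk_surjective r
    induction p using MvPolynomial.induction_on with
    | C c =>
      have : (mkI (C c) : Rxy) = algebraMap ℂ Rxy c := rfl
      rw [show ((Ideal.Quotient.mk _ (C c)) : Rxy) = algebraMap ℂ Rxy c from rfl,
        Derivation.map_algebraMap]
      exact zero_mem _
    | add p q hp hq =>
      rw [map_add, map_add]
      exact add_mem hp hq
    | mul_X p i hp =>
      rw [map_mul, Derivation.leibniz]
      refine add_mem (Submodule.smul_mem _ _ ?_) (Submodule.smul_mem _ _ hp)
      fin_cases i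
      · exact Submodule.subset_span (Set.mem_insert _ _)
      · exact Submodule.subset_span (Set.mem_insert_of_mem _ rfl)
  exact hle (by rw [KaehlerDifferential.span_range_derivation]; trivial)

/-! ### The torsion relation -/

lemma hrelΩ : xR • KaehlerDifferential.D ℂ Rxy yR
    + yR • KaehlerDifferential.D ℂ Rxy xR = 0 := by
  have h := (KaehlerDifferential.D ℂ Rxy).leibniz xR yR
  rw [hxyzero, map_zero] at h
  exact h.symm

lemma key_tors {ω : KaehlerDifferential ℂ Rxy} (hω : ψK ω = 0) :
    (xR + yR) • ω = 0 := by
  obtain ⟨a, b, hab⟩ := Submodule.mem_span_pair.mp (mem_span_Dxy ω)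
  obtain ⟨A, rfl⟩ := Ideal.Quotient.mk_surjective a
  obtain ⟨B, rfl⟩ := Ideal.Quotient.mk_surjective b
  -- from `ψK ω = 0` we get `A·X0 - B·X1 ∈ (X0·X1)`
  have hψ : mkI (A * X 0 - B * X 1) = 0 := by
    have h1 : ψK ω = mkI (A * X 0 - B * X 1) := by
      rw [← hab, map_add, map_smul, map_smul, ψK_Dx, ψK_Dy, smul_eq_mul, smul_eq_mul,
        map_sub, map_mul, map_mul, show xR = mkI (X 0) from rfl,
        show yR = mkI (X 1) from rfl]
      ring
    rw [← h1, hω]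
  rw [Ideal.Quotient.eq_zero_iff_mem, Ideal.mem_span_singleton] at hψ
  obtain ⟨t, ht⟩ := hψ
  -- extract divisibility: `X 1 ∣ A` and `X 0 ∣ B`
  have hA : X 1 ∣ A := by
    refine X1_dvd_of ?_
    have := congrArg σ1 ht
    rw [map_sub, map_mul, map_mul, map_mul, map_mul, sigma1_X0, sigma1_X1] at this
    simp only [mul_zero, zero_mul, sub_zero] at this
    rcases mul_eq_zero.mp this with h | h
    · exact h
    · exact absurd h (X_ne_zero 0)
  have hB : X 0 ∣ B := by
    refine X0_dvd_of ?_
    have := congrArg σ0 ht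
    rw [map_sub, map_mul, map_mul, map_mul, map_mul, sigma0_X0, sigma0_X1] at this
    simp only [mul_zero, zero_mul, zero_sub, neg_eq_zero] at this
    rcases mul_eq_zero.mp this with h | h
    · exact h
    · exact absurd h (X_ne_zero 1)
  obtain ⟨A', rfl⟩ := hA
  obtain ⟨B', rfl⟩ := hB
  -- now rewrite ω in terms of the torsion element `τ = x • D y`
  set u := KaehlerDifferential.D ℂ Rxy xR with hu
  set v := KaehlerDifferential.D ℂ Rxy yR with hv
  have h0 : xR • v + yR • u = 0 := by rw [hu, hv]; exact hrelΩ
  have hyu : yR • u = -(xR • v) := eq_neg_of_add_eq_zero_right h0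
  have hxv : xR • v = -(yR • u) := eq_neg_of_add_eq_zero_left h0
  have e1 : mkI (X 1 * A') • u = mkI A' • (yR • u) := by
    rw [map_mul, show (mkI (X 1) : Rxy) = yR from rfl, mul_comm yR (mkI A')]
    exact mul_smul (mkI A') yR u
  have e2 : mkI (X 0 * B') • v = mkI B' • (xR • v) := by
    rw [map_mul, show (mkI (X 0) : Rxy) = xR from rfl, mul_comm xR (mkI B')]
    exact mul_smul (mkI B') xR v
  have hω2 : ω = (mkI B' - mkI A') • (xR • v) := by
    rw [← hab, e1, e2, hyu, show mkI A' • -(xR • v) = -(mkI A' • (xR • v)) from smul_neg (mkI A') (xR • v),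
      show (mkI B' - mkI A') • (xR • v) = mkI B' • (xR • v) - mkI A' • (xR • v) from sub_smul (mkI B') (mkI A') (xR • v)]
    abel
  have hxτ : xR • (xR • v) = 0 := by
    rw [hxv, show xR • -(yR • u) = -(xR • (yR • u)) from smul_neg xR (yR • u),
      show xR • (yR • u) = (xR * yR) • u from (mul_smul xR yR u).symm, hxyzero,
      show (0 : Rxy) • u = 0 from zero_smul Rxy u, neg_zero]
  have hyτ : yR • (xR • v) = 0 := by
    rw [show yR • (xR • v) = (yR * xR) • v from (mul_smul yR xR v).symm, mul_comm yR xR, hxyzero,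
      show (0 : Rxy) • v = 0 from zero_smul Rxy v]
  have : SMulCommClass Rxy Rxy (KaehlerDifferential ℂ Rxy) := smulCommClass_self Rxy (KaehlerDifferential ℂ Rxy)
  rw [hω2, smul_comm (xR + yR) (mkI B' - mkI A'),
    show (xR + yR) • (xR • v) = xR • (xR • v) + yR • (xR • v) from add_smul xR yR (xR • v), hxτ, hyτ, add_zero,
    show (mkI B' - mkI A') • (0 : KaehlerDifferential ℂ Rxy) = 0 from smul_zero (mkI B' - mkI A')]

/-! ### Assembly -/

lemma esymm_apply (c : Rxy) : eLequiv.symm c = c • ξL := by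
  rw [eLequiv, LinearEquiv.ofLinear_symm_apply]
  exact LinearMap.toSpanSingleton_apply Rxy Lmod ξL c

set_option synthInstance.maxHeartbeats 2000000 in
lemma neg_smul_xi (c : Rxy) : (-c) • ξL = c • ηL := by
  have h1 : (-c) • ξL = Submodule.Quotient.mk ((-c) • ![1, 0]) :=
    (Submodule.Quotient.mk_smul _ _ _).symm
  have h2 : c • ηL = Submodule.Quotient.mk (c • ![0, 1]) :=
    (Submodule.Quotient.mk_smul _ _ _).symm
  rw [h1, h2, Submodule.Quotient.eq]
  refine Submodule.mem_span_singleton.mpr ⟨-c, ?_⟩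
  funext i
  fin_cases i <;>
    simp only [Matrix.smul_cons, Matrix.smul_empty, smul_eq_mul, Pi.sub_apply,
      Fin.isValue, Fin.zero_eta, Fin.mk_one, Matrix.cons_val_zero, Matrix.cons_val_one,
      Matrix.head_cons, mul_one, mul_zero] <;> ring

noncomputable def φK : KaehlerDifferential ℂ Rxy →ₗ[Rxy] Lmod :=
  (eLequiv.symm.toLinearMap).comp ψK

lemma φK_Dx : φK (KaehlerDifferential.D ℂ Rxy xR) = xR • ξL := by
  rw [φK, LinearMap.comp_apply, ψK_Dx, LinearEquiv.coe_coe, esymm_apply]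

lemma φK_Dy : φK (KaehlerDifferential.D ℂ Rxy yR) = yR • ηL := by
  rw [φK, LinearMap.comp_apply, ψK_Dy, LinearEquiv.coe_coe, esymm_apply, neg_smul_xi]

lemma ker_φK : LinearMap.ker φK = LinearMap.ker ψK :=
  LinearMap.ker_comp_of_ker_eq_bot ψK (LinearEquiv.ker _)

lemma ker_ψK_eq :
    LinearMap.ker ψK = Submodule.torsion Rxy (KaehlerDifferential ℂ Rxy) := by
  ext ω
  rw [LinearMap.mem_ker, Submodule.mem_torsion_iff]
  constructor
  · intro h
    exact ⟨⟨xR + yR, xR_add_yR_nzd⟩, key_tors h⟩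
  · rintro ⟨r, hr⟩
    have h2 : ψK ((r : Rxy) • ω) = 0 := by
      rw [show (r : Rxy) • ω = 0 from hr, map_zero]
    rw [map_smul, smul_eq_mul] at h2
    refine (mem_nonZeroDivisors_iff_right.mp r.2) _ ?_
    rw [mul_comm] at h2
    exact h2

/-- `L` is free of rank 1 over `R`, and the `R`-linear map `Ω¹_{R/ℂ} → L` with
`dx ↦ x·ξ`, `dy ↦ y·η` is well-defined, with kernel the torsion submodule. -/
theorem stmt12 :
    Nonempty (Module.Basis (Fin 1) Rxy Lmod) ∧
    ∃ φ : KaehlerDifferential ℂ Rxy →ₗ[Rxy] Lmod,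
      φ ((KaehlerDifferential.D ℂ Rxy) xR) = xR • ξL ∧
      φ ((KaehlerDifferential.D ℂ Rxy) yR) = yR • ηL ∧
      LinearMap.ker φ = Submodule.torsion Rxy (KaehlerDifferential ℂ Rxy) := by
  refine ⟨⟨(Module.Basis.singleton (Fin 1) Rxy).map eLequiv.symm⟩, φK, φK_Dx, φK_Dy, ?_⟩
  rw [ker_φK, ker_ψK_eq]
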